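/- Let R = K[x1, x2, y1, ..., yq, z1, ..., zs] be a polynomial ring over a field and f ∈ R. Then there exists a subset S of {1,...,q} that is maximum with respect to inclusion (i.e., containing every other such subset) among subsets T such that f ∈ (x1, x2) + (∏_{j∈T} y_j)·R. -/

import Mathlib

open MvPolynomial

private lemma aux_sub_dvd (K : Type*) [Field K] {σ : Type*} [DecidableEq σ] (v : σ)
    (p : MvPolynomial σ K) :
    X v ∣ p - aeval (fun k => if k = v then (0 : MvPolynomial σ K) else X k) p := by
  induction p using MvPolynomial.induction_on with
  | C a => simp
  | add p q hp hq =>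
      have := dvd_add hp hq
      simpa [add_sub_add_comm] using this
  | mul_X p w hp =>
      by_cases hw : w = v
      · subst hw
        have h0 : (aeval fun k => if k = w then (0 : MvPolynomial σ K) else X k) (p * X w) = 0 := by
          simp
        rw [h0, sub_zero]
        exact dvd_mul_left _ _
      · rw [map_mul, aeval_X, if_neg hw, show p * X w - aeval _ p * X w
            = (p - aeval (fun k => if k = v then (0 : MvPolynomial σ K) else X k) p) * X w by ring]
        exact hp.mul_right _

private lemma aux_X_dvd_iff (K : Type*) [Field K] {σ : Type*} [DecidableEq σ] (v : σ)
    (p : MvPolynomial σ K) :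
    X v ∣ p ↔ aeval (fun k => if k = v then (0 : MvPolynomial σ K) else X k) p = 0 := by
  constructor
  · rintro ⟨c, rfl⟩
    simp
  · intro h
    have := aux_sub_dvd K v p
    rwa [h, sub_zero] at this

private lemma aux_prod_X_dvd (K : Type*) [Field K] {σ ι : Type*} [DecidableEq σ] [DecidableEq ι]
    (g : ι → σ) (hg : Function.Injective g) (S : Finset ι) (n : MvPolynomial σ K)
    (h : ∀ j ∈ S, X (g j) ∣ n) : (∏ j ∈ S, (X (g j) : MvPolynomial σ K)) ∣ n := by
  induction S using Finset.induction_on generalizing n with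
  | empty => simp
  | insert j S hj ih =>
      obtain ⟨m, hm⟩ := h j (Finset.mem_insert_self _ _)
      have hdm : ∀ i ∈ S, X (g i) ∣ m := by
        intro i hi
        have hne : g j ≠ g i := fun e => hj (hg e ▸ hi)
        have hd := h i (Finset.mem_insert_of_mem hi)
        rw [aux_X_dvd_iff, hm, map_mul, aeval_X, if_neg hne] at hd
        rcases mul_eq_zero.mp hd with h1 | h2
        · exact absurd h1 (X_ne_zero _)
        · exact (aux_X_dvd_iff K (g i) m).mpr h2
      rw [Finset.prod_insert hj, hm]
      exact mul_dvd_mul_left _ (ih m hdm)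

private lemma aux_ker_sub (K : Type*) [Field K] {W : Type*} (p : MvPolynomial (Fin 2 ⊕ W) K) :
    p - rename Sum.inr ((aeval (Sum.elim (fun _ => (0 : MvPolynomial W K)) X)) p)
      ∈ Ideal.span {(X (Sum.inl 0) : MvPolynomial (Fin 2 ⊕ W) K), X (Sum.inl 1)} := by
  induction p using MvPolynomial.induction_on with
  | C a => simp
  | add p q hp hq =>
      have := Ideal.add_mem _ hp hq
      simpa [add_sub_add_comm] using this
  | mul_X p v hp =>
      rcases v with i | w
      · have h0 : (aeval (Sum.elim (fun _ => (0 : MvPolynomial W K)) X)) (p * X (Sum.inl i)) = 0 := by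
          simp
        rw [h0, map_zero, sub_zero]
        apply Ideal.mul_mem_left
        fin_cases i
        · exact Ideal.subset_span (by simp)
        · exact Ideal.subset_span (by simp)
      · rw [map_mul, aeval_X, Sum.elim_inr, map_mul, rename_X,
            show p * X (Sum.inr w) - rename Sum.inr ((aeval (Sum.elim (fun _ => (0 : MvPolynomial W K)) X)) p) * X (Sum.inr w)
              = (p - rename Sum.inr ((aeval (Sum.elim (fun _ => (0 : MvPolynomial W K)) X)) p)) * X (Sum.inr w) by ring]
        exact Ideal.mul_mem_right _ _ hp

theorem stmt_3 (K : Type*) [Field K] (q s : ℕ)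
    (f : MvPolynomial (Fin 2 ⊕ Fin q ⊕ Fin s) K) :
    let R := MvPolynomial (Fin 2 ⊕ Fin q ⊕ Fin s) K
    let x : Fin 2 → R := fun i => X (Sum.inl i)
    let y : Fin q → R := fun j => X (Sum.inr (Sum.inl j))
    let admits : Finset (Fin q) → Prop := fun T =>
      f ∈ Ideal.span {x 0, x 1} ⊔ Ideal.span {∏ j ∈ T, y j}
    ∃ S : Finset (Fin q), admits S ∧ ∀ T, admits T → T ⊆ S := by
  classical
  intro R x y admits
  have key : ∀ T : Finset (Fin q),
      admits T ↔ (∏ j ∈ T, (X (Sum.inl j) : MvPolynomial (Fin q ⊕ Fin s) K))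
        ∣ (aeval (Sum.elim (fun _ => (0 : MvPolynomial (Fin q ⊕ Fin s) K)) X)) f := by
    intro T
    constructor
    · intro hT
      rw [show admits T = (f ∈ Ideal.span {x 0, x 1} ⊔ Ideal.span {∏ j ∈ T, y j}) from rfl] at hT
      rw [Submodule.mem_sup] at hT
      obtain ⟨a, ha, b, hb, hab⟩ := hT
      rw [Ideal.mem_span_pair] at ha
      obtain ⟨h1, h2, rfl⟩ := ha
      rw [Ideal.mem_span_singleton] at hb
      obtain ⟨c, rfl⟩ := hb
      have hEq : (aeval (Sum.elim (fun _ => (0 : MvPolynomial (Fin q ⊕ Fin s) K)) X)) f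
          = (∏ j ∈ T, (X (Sum.inl j) : MvPolynomial (Fin q ⊕ Fin s) K))
            * (aeval (Sum.elim (fun _ => (0 : MvPolynomial (Fin q ⊕ Fin s) K)) X)) c := by
        rw [← hab]
        simp [x, y]
      rw [hEq]
      exact dvd_mul_right _ _
    · rintro ⟨c, hc⟩
      have hψprod : (rename Sum.inr : MvPolynomial (Fin q ⊕ Fin s) K
            →ₐ[K] MvPolynomial (Fin 2 ⊕ Fin q ⊕ Fin s) K)
          (∏ j ∈ T, (X (Sum.inl j) : MvPolynomial (Fin q ⊕ Fin s) K)) = ∏ j ∈ T, y j := by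
        simp [y]
      have hmem2 : (∏ j ∈ T, y j) * rename Sum.inr c ∈ Ideal.span {∏ j ∈ T, y j} :=
        Ideal.mul_mem_right _ _ (Ideal.subset_span rfl)
      have hmem1 : f - (∏ j ∈ T, y j) * rename Sum.inr c ∈ Ideal.span {x 0, x 1} := by
        have h := aux_ker_sub K f
        rw [hc, map_mul, hψprod] at h
        exact h
      have hsplit : f = (f - (∏ j ∈ T, y j) * rename Sum.inr c)
          + (∏ j ∈ T, y j) * rename Sum.inr c := by ring
      rw [show admits T = (f ∈ Ideal.span {x 0, x 1} ⊔ Ideal.span {∏ j ∈ T, y j}) from rfl,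
        hsplit]
      exact Submodule.add_mem_sup hmem1 hmem2
  refine ⟨Finset.univ.filter (fun j => (X (Sum.inl j) : MvPolynomial (Fin q ⊕ Fin s) K)
      ∣ (aeval (Sum.elim (fun _ => (0 : MvPolynomial (Fin q ⊕ Fin s) K)) X)) f), ?_, ?_⟩
  · rw [key]
    refine aux_prod_X_dvd K Sum.inl (fun a b h => Sum.inl.inj h) _ _ ?_
    intro j hj
    exact (Finset.mem_filter.mp hj).2
  · intro T hT j hj
    rw [key] at hT
    refine Finset.mem_filter.mpr ⟨Finset.mem_univ _, dvd_trans ?_ hT⟩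
    exact Finset.dvd_prod_of_mem _ hj
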